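/- arXiv:1711.04337 — 4 statements merged into one kernel-verified Lean document; each statement's English description precedes it below -/
import Mathlib

section
/- Let G be a compact connected abelian group with probability Haar measure μ_G, and let A, B be nonempty compact subsets of G. Then μ_G(A + B) ≥ min(μ_G(A) + μ_G(B), 1), where A + B = {a + b : a ∈ A, b ∈ B}. -/
open MeasureTheory Set Pointwise

private lemma kneser_aux {G : Type*} [AddCommGroup G] [TopologicalSpace G]
    [IsTopologicalAddGroup G] [CompactSpace G] [ConnectedSpace G]
    [MeasurableSpace G] [BorelSpace G]
    (μ : Measure G) [μ.IsAddHaarMeasure] [IsProbabilityMeasure μ]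
    (A B : Set G) (hA : A.Nonempty) (hB : B.Nonempty)
    (hAcl : IsClosed A) (hBcl : IsClosed B) :
    min (μ A + μ B) 1 ≤ μ (closure (A + B)) := by
  classical
  set K : Set G := closure (A + B) with hK
  have hKcl : IsClosed K := isClosed_closure
  -- the collection of pairs for the Zorn argument
  set S : Set (Set G × (Set G)ᵒᵈ) :=
    {p | IsClosed p.1 ∧ IsClosed (OrderDual.ofDual p.2) ∧ p.1.Nonempty ∧
      (OrderDual.ofDual p.2).Nonempty ∧ p.1 + OrderDual.ofDual p.2 ⊆ K ∧
      μ A + μ B ≤ μ p.1 + μ (OrderDual.ofDual p.2)} with hS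
  have hstart : ((A, OrderDual.toDual B) : Set G × (Set G)ᵒᵈ) ∈ S :=
    ⟨hAcl, hBcl, hA, hB, subset_closure, le_rfl⟩
  -- every chain has an upper bound
  have hchains : ∀ c ⊆ S, IsChain (· ≤ ·) c → ∀ y ∈ c,
      ∃ ub ∈ S, ∀ z ∈ c, z ≤ ub := by
    intro c hcS hchain y hy
    haveI : Nonempty c := ⟨⟨y, hy⟩⟩
    set f : c → Set G := fun p => OrderDual.ofDual (p : Set G × (Set G)ᵒᵈ).2 with hf
    set Au : Set G := closure (⋃ p : c, (p : Set G × (Set G)ᵒᵈ).1) with hAu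
    set Bu : Set G := ⋂ p : c, f p with hBu
    have hfcl : ∀ p : c, IsClosed (f p) := fun p => (hcS p.2).2.1
    have hfc : ∀ p : c, IsCompact (f p) := fun p => (hfcl p).isCompact
    have hfne : ∀ p : c, (f p).Nonempty := fun p => (hcS p.2).2.2.2.1
    have hdir : Directed (· ⊇ ·) f := by
      rintro p q
      rcases eq_or_ne p q with rfl | hpq
      · exact ⟨p, le_refl _, le_refl _⟩
      rcases hchain.total p.2 q.2 with h | h
      · exact ⟨q, h.2, le_refl _⟩
      · exact ⟨p, le_refl _, h.2⟩
    have hBune : Bu.Nonempty :=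
      IsCompact.nonempty_iInter_of_directed_nonempty_isCompact_isClosed f hdir hfne hfc hfcl
    have hBucl : IsClosed Bu := isClosed_iInter hfcl
    have hAune : Au.Nonempty := by
      obtain ⟨a, ha⟩ := (hcS hy).2.2.1
      exact ⟨a, subset_closure (mem_iUnion.2 ⟨⟨y, hy⟩, ha⟩)⟩
    -- sumset condition
    have hsum : Au + Bu ⊆ K := by
      rintro x ⟨u, hu, v, hv, rfl⟩
      have hmap : Set.MapsTo (· + v) (⋃ p : c, (p : Set G × (Set G)ᵒᵈ).1) K := by
        rintro w hw
        obtain ⟨p, hwp⟩ := mem_iUnion.1 hw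
        exact (hcS p.2).2.2.2.2.1 ⟨w, hwp, v, iInter_subset f p hv, rfl⟩
      have := map_mem_closure (continuous_add_right v) hu hmap
      rwa [hKcl.closure_eq] at this
    -- measure condition
    have hmeas : μ A + μ B ≤ μ Au + μ Bu := by
      refine ENNReal.le_of_forall_pos_le_add fun ε hε _ => ?_
      obtain ⟨U, hBuU, hUopen, hμU⟩ := Set.exists_isOpen_lt_of_lt Bu (μ Bu + ε)
        (ENNReal.lt_add_right (measure_ne_top μ Bu) (by exact_mod_cast hε.ne'))
      -- find an element of the chain whose second component is inside U
      have hiempty : (univ : Set G) ∩ ⋂ p : c, (f p ∩ Uᶜ) = ∅ := by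
        rw [univ_inter, ← iInter_inter]
        apply eq_empty_of_forall_notMem
        rintro x ⟨hx1, hx2⟩
        exact hx2 (hBuU hx1)
      obtain ⟨p, hp⟩ := IsCompact.elim_directed_family_closed isCompact_univ
        (fun p : c => f p ∩ Uᶜ) (fun p => (hfcl p).inter hUopen.isClosed_compl) hiempty
        (by
          rintro p q
          obtain ⟨r, h1, h2⟩ := hdir p q
          exact ⟨r, inter_subset_inter h1 Subset.rfl, inter_subset_inter h2 Subset.rfl⟩)
      have hpU : f p ⊆ U := by
        intro x hx
        by_contra hxU
        exact absurd hp (by rw [univ_inter]; exact nonempty_iff_ne_empty.1 ⟨x, hx, hxU⟩)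
      calc μ A + μ B ≤ μ (p : Set G × (Set G)ᵒᵈ).1 + μ (f p) := (hcS p.2).2.2.2.2.2
        _ ≤ μ Au + μ Bu + ε := by
            rw [add_assoc]
            refine add_le_add (measure_mono ?_) ((measure_mono hpU).trans hμU.le)
            exact (subset_iUnion (fun q : c => (q : Set G × (Set G)ᵒᵈ).1) p).trans subset_closure
    refine ⟨(Au, OrderDual.toDual Bu), ⟨isClosed_closure, hBucl, hAune, hBune, hsum, hmeas⟩,
      fun z hz => ?_⟩
    constructor
    · exact (subset_iUnion (fun q : c => (q : Set G × (Set G)ᵒᵈ).1) ⟨z, hz⟩).trans subset_closure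
    · exact iInter_subset f ⟨z, hz⟩
  obtain ⟨m, -, hmax⟩ := zorn_le_nonempty₀ S hchains (A, OrderDual.toDual B) hstart
  obtain ⟨hA₁cl, hB₁cl, hA₁ne, hB₁ne, hsub, hμge⟩ := hmax.prop
  set A₁ : Set G := m.1 with hA₁
  set B₁ : Set G := OrderDual.ofDual m.2 with hB₁
  -- the key property of the maximal pair, via the Dyson transform
  have hkey : ∀ a ∈ A₁, ∀ b ∈ B₁, (a - b) +ᵥ B₁ ⊆ A₁ := by
    intro a ha b hb
    set e : G := a - b with he
    set X : Set G := e +ᵥ B₁ with hX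
    set B' : Set G := B₁ ∩ ((-e) +ᵥ A₁) with hB'
    have hXcl : IsClosed X := hB₁cl.vadd e
    have hB'eq : B' = (-e) +ᵥ (A₁ ∩ X) := by
      rw [hB', hX, Set.vadd_set_inter, neg_vadd_vadd, inter_comm]
    have hbB' : b ∈ B' := by
      refine ⟨hb, ?_⟩
      rw [Set.mem_vadd_set_iff_neg_vadd_mem, neg_neg, he, vadd_eq_add, sub_add_cancel]
      exact ha
    have hmem' : ((A₁ ∪ X, OrderDual.toDual B') : Set G × (Set G)ᵒᵈ) ∈ S := by
      refine ⟨hA₁cl.union hXcl, hB₁cl.inter (hA₁cl.vadd (-e)), hA₁ne.mono subset_union_left,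
        ⟨b, hbB'⟩, ?_, ?_⟩
      · rw [Set.union_add]
        refine union_subset ((add_subset_add_left inter_subset_left).trans hsub) ?_
        rintro x ⟨u, hu, v, hv, rfl⟩
        obtain ⟨b', hb', rfl⟩ := hu
        obtain ⟨a', ha', rfl⟩ := hv.2
        show (e +ᵥ b') + (-e +ᵥ a') ∈ K
        have heq : (e +ᵥ b') + (-e +ᵥ a') = a' + b' := by
          simp only [vadd_eq_add]; abel
        rw [heq]
        exact hsub (add_mem_add ha' hb')
      · have h1 : μ (A₁ ∪ X) + μ (A₁ ∩ X) = μ A₁ + μ X :=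
          measure_union_add_inter A₁ hXcl.measurableSet
        have h2 : μ B' = μ (A₁ ∩ X) := by rw [hB'eq, measure_vadd]
        have h3 : μ X = μ B₁ := by rw [hX, measure_vadd]
        calc μ A + μ B ≤ μ A₁ + μ B₁ := hμge
          _ = μ A₁ + μ X := by rw [h3]
          _ = μ (A₁ ∪ X) + μ (A₁ ∩ X) := h1.symm
          _ = μ (A₁ ∪ X) + μ B' := by rw [h2]
    have hle2 : m ≤ (A₁ ∪ X, OrderDual.toDual B') := by
      constructor
      · exact subset_union_left
      · exact inter_subset_left (s := B₁) (t := (-e) +ᵥ A₁)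
    have hfinal := hmax.2 hmem' hle2
    exact subset_union_right.trans hfinal.1
  -- A₁ is invariant under translation by the closed subgroup generated by B₁ - B₁
  have hstep : ∀ g ∈ B₁ - B₁, ∀ a ∈ A₁, a + g ∈ A₁ := by
    rintro g ⟨b', hb', b'', hb'', rfl⟩ a ha
    have h := hkey a ha b'' hb'' (Set.vadd_mem_vadd_set (a := a - b'') hb')
    have : a + (b' - b'') = (a - b'') +ᵥ b' := by simp only [vadd_eq_add]; abel
    rwa [this]
  have hsubmono : ∀ g ∈ AddSubmonoid.closure (B₁ - B₁), ∀ a ∈ A₁, a + g ∈ A₁ := by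
    intro g hg
    induction hg using AddSubmonoid.closure_induction with
    | mem x hx => exact hstep x hx
    | zero => intro a ha; simpa using ha
    | add x y _ _ hx hy =>
        intro a ha
        have := hy (a + x) (hx a ha)
        rwa [add_assoc] at this
  have hgrp : ∀ g ∈ AddSubgroup.closure (B₁ - B₁), ∀ a ∈ A₁, a + g ∈ A₁ := by
    intro g hg
    have hsym : -(B₁ - B₁) = B₁ - B₁ := by
      ext x
      simp only [Set.mem_neg, Set.mem_sub]
      constructor
      · rintro ⟨u, hu, v, hv, huv⟩
        exact ⟨v, hv, u, hu, by rw [← neg_neg x, ← huv, neg_sub]⟩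
      · rintro ⟨u, hu, v, hv, huv⟩
        exact ⟨v, hv, u, hu, by rw [← huv, neg_sub]⟩
    have : g ∈ AddSubmonoid.closure ((B₁ - B₁) ∪ -(B₁ - B₁)) := by
      rw [← AddSubgroup.closure_toAddSubmonoid]
      exact hg
    rw [hsym, union_self] at this
    exact hsubmono g this
  set H : AddSubgroup G := (AddSubgroup.closure (B₁ - B₁)).topologicalClosure with hHdef
  have hHcl : IsClosed (H : Set G) := AddSubgroup.isClosed_topologicalClosure _
  have hH : ∀ g ∈ (H : Set G), ∀ a ∈ A₁, a + g ∈ A₁ := by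
    intro g hg a ha
    have hgc : g ∈ closure ((AddSubgroup.closure (B₁ - B₁) : Set G)) := hg
    have := map_mem_closure (continuous_add_left a) hgc
      (fun x hx => hgrp x hx a ha)
    rwa [hA₁cl.closure_eq] at this
  obtain ⟨b₀, hb₀⟩ := hB₁ne
  have hsubH : B₁ - B₁ ⊆ (H : Set G) := fun x hx =>
    AddSubgroup.le_topologicalClosure _ (AddSubgroup.subset_closure hx)
  have hBH : B₁ ⊆ b₀ +ᵥ (H : Set G) := by
    intro b hb
    exact ⟨b - b₀, hsubH (Set.sub_mem_sub hb hb₀), by simp⟩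
  have hAB₁ : A₁ + B₁ = b₀ +ᵥ A₁ := by
    apply Subset.antisymm
    · rintro x ⟨a, ha, b, hb, rfl⟩
      refine ⟨a + (b - b₀), hH _ (hsubH (Set.sub_mem_sub hb hb₀)) a ha, ?_⟩
      simp only [vadd_eq_add]; abel
    · rintro x ⟨a, ha, rfl⟩
      exact ⟨a, ha, b₀, hb₀, by simp only [vadd_eq_add]; abel⟩
  have hμAB₁ : μ (A₁ + B₁) = μ A₁ := by rw [hAB₁, measure_vadd]
  by_cases hHzero : μ (H : Set G) = 0
  · have hμB₁ : μ B₁ = 0 := by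
      refine le_antisymm ?_ zero_le
      calc μ B₁ ≤ μ (b₀ +ᵥ (H : Set G)) := measure_mono hBH
        _ = 0 := by rw [measure_vadd]; exact hHzero
    calc min (μ A + μ B) 1 ≤ μ A + μ B := min_le_left _ _
      _ ≤ μ A₁ + μ B₁ := hμge
      _ = μ A₁ := by rw [hμB₁, add_zero]
      _ = μ (A₁ + B₁) := hμAB₁.symm
      _ ≤ μ K := measure_mono hsub
  · have hHpos : 0 < μ (H : Set G) := pos_iff_ne_zero.2 hHzero
    have hnh : (H : Set G) - (H : Set G) ∈ nhds (0 : G) :=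
      MeasureTheory.Measure.sub_mem_nhds_zero_of_addHaar_pos μ (H : Set G)
        hHcl.measurableSet hHpos
    have hHnh : (H : Set G) ∈ nhds (0 : G) := by
      refine Filter.mem_of_superset hnh ?_
      rintro x ⟨h₁, hh₁, h₂, hh₂, rfl⟩
      exact sub_mem hh₁ hh₂
    have hHopen : IsOpen (H : Set G) := AddSubgroup.isOpen_of_mem_nhds H hHnh
    have hHuniv : (H : Set G) = univ :=
      (IsClopen.eq_univ ⟨hHcl, hHopen⟩) ⟨0, zero_mem _⟩
    have hA₁univ : A₁ = univ := by
      obtain ⟨a₀, ha₀⟩ := hA₁ne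
      ext x
      simp only [mem_univ, iff_true]
      have hx : x - a₀ ∈ (H : Set G) := by rw [hHuniv]; trivial
      have := hH (x - a₀) hx a₀ ha₀
      rwa [add_sub_cancel] at this
    calc min (μ A + μ B) 1 ≤ 1 := min_le_right _ _
      _ = μ (A₁ + B₁) := by rw [hμAB₁, hA₁univ, measure_univ]
      _ ≤ μ K := measure_mono hsub

theorem kneser_inequality {G : Type*} [AddCommGroup G] [TopologicalSpace G]
    [IsTopologicalAddGroup G] [CompactSpace G] [ConnectedSpace G]
    [MeasurableSpace G] [BorelSpace G]
    (μ : Measure G) [μ.IsAddHaarMeasure] [IsProbabilityMeasure μ]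
    (A B : Set G) (hA : A.Nonempty) (hB : B.Nonempty)
    (hAc : IsCompact A) (hBc : IsCompact B) :
    min ((μ A).toReal + (μ B).toReal) 1 ≤ (μ (A + B)).toReal := by
  have key := kneser_aux μ (closure A) (closure B) hA.closure hB.closure
    isClosed_closure isClosed_closure
  have hsum : closure A + closure B ⊆ closure (A + B) := by
    rintro x ⟨u, hu, v, hv, rfl⟩
    exact map_mem_closure₂ continuous_add hu hv fun a ha b hb => add_mem_add ha hb
  have hc1 : closure (closure A + closure B) ⊆ closure (A + B) := by
    rw [← closure_closure (s := A + B)]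
    exact closure_mono hsum
  have hμclA : μ (closure A) = μ A := hAc.measure_closure μ
  have hμclB : μ (closure B) = μ B := hBc.measure_closure μ
  have hμclAB : μ (closure (A + B)) = μ (A + B) := (hAc.add hBc).measure_closure μ
  have hEN : min (μ A + μ B) 1 ≤ μ (A + B) := by
    calc min (μ A + μ B) 1 = min (μ (closure A) + μ (closure B)) 1 := by
          rw [hμclA, hμclB]
      _ ≤ μ (closure (closure A + closure B)) := key
      _ ≤ μ (closure (A + B)) := measure_mono hc1
      _ = μ (A + B) := hμclAB
  have hfin : μ (A + B) ≠ ⊤ := measure_ne_top μ _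
  have hfin2 : μ A + μ B ≠ ⊤ := by
    exact ENNReal.add_ne_top.2 ⟨measure_ne_top μ _, measure_ne_top μ _⟩
  have := ENNReal.toReal_mono hfin hEN
  rwa [ENNReal.toReal_min hfin2 ENNReal.one_ne_top, ENNReal.toReal_add (measure_ne_top μ _)
    (measure_ne_top μ _), ENNReal.toReal_one] at this
end

section
/- Let G be a compact abelian group with probability Haar measure μ_G, let B ⊆ G be measurable, let t ≥ 0, and for measurable A define c(A) := ∫_G min(1_A * 1_B, t) dμ_G − t(μ_G(A) + μ_G(B) − t). Then for all measurable A₁, A₂ ⊆ G one has c(A₁) + c(A₂) ≥ c(A₁ ∩ A₂) + c(A₁ ∪ A₂). -/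
open MeasureTheory Set Pointwise

private lemma min_submodular_aux {a b c d t : ℝ} (h : c + d = a + b)
    (hca : c ≤ a) (hcb : c ≤ b) :
    min c t + min d t ≤ min a t + min b t := by
  simp only [min_def]
  split_ifs <;> linarith

theorem submodularity_c {G : Type*} [AddCommGroup G] [TopologicalSpace G]
    [IsTopologicalAddGroup G] [CompactSpace G]
    [MeasurableSpace G] [BorelSpace G]
    (μ : Measure G) [μ.IsAddHaarMeasure] [IsProbabilityMeasure μ]
    (B : Set G) (hB : MeasurableSet B) (t : ℝ) (ht : 0 ≤ t)
    (c : Set G → ℝ)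
    (hc : ∀ A : Set G, c A =
      (∫ x, min (∫ y, A.indicator 1 y * B.indicator 1 (x - y) ∂μ) t ∂μ)
        - t * ((μ A).toReal + (μ B).toReal - t))
    (A₁ A₂ : Set G) (hA₁ : MeasurableSet A₁) (hA₂ : MeasurableSet A₂) :
    c (A₁ ∩ A₂) + c (A₁ ∪ A₂) ≤ c A₁ + c A₂ := by
  set f : Set G → G → ℝ :=
    fun A x => ∫ y, A.indicator 1 y * B.indicator 1 (x - y) ∂μ with hfdef
  have hBm : Measurable (B.indicator (1 : G → ℝ)) := measurable_one.indicator hB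
  -- generic integrability of bounded measurable functions
  have intb : ∀ (h : G → ℝ) (C : ℝ), Measurable h → (∀ y, |h y| ≤ C) →
      Integrable h μ := by
    intro h C hm hb
    exact (integrable_const C).mono' hm.aestronglyMeasurable
      (ae_of_all _ fun y => by simpa [Real.norm_eq_abs] using hb y)
  -- pointwise bounds on the integrand
  have ind01 : ∀ (A : Set G) (y : G), A.indicator (1 : G → ℝ) y = 0 ∨
      A.indicator (1 : G → ℝ) y = 1 := by
    intro A y
    by_cases h : y ∈ A <;> simp [Set.indicator, h]
  have gb : ∀ (A : Set G) (x y : G),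
      0 ≤ A.indicator (1 : G → ℝ) y * B.indicator 1 (x - y) ∧
      A.indicator (1 : G → ℝ) y * B.indicator 1 (x - y) ≤ 1 := by
    intro A x y
    rcases ind01 A y with h1 | h1 <;> rcases ind01 B (x - y) with h2 | h2 <;>
      rw [h1, h2] <;> norm_num
  -- measurability and integrability of the integrand in y
  have gmeas : ∀ (A : Set G), MeasurableSet A → ∀ x : G,
      Measurable (fun y => A.indicator (1 : G → ℝ) y * B.indicator 1 (x - y)) := by
    intro A hA x
    exact (measurable_one.indicator hA).mul
      (hBm.comp (continuous_const.sub continuous_id).measurable)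
  have gint : ∀ (A : Set G), MeasurableSet A → ∀ x : G,
      Integrable (fun y => A.indicator (1 : G → ℝ) y * B.indicator 1 (x - y)) μ := by
    intro A hA x
    refine intb _ 1 (gmeas A hA x) fun y => ?_
    rw [abs_of_nonneg (gb A x y).1]
    exact (gb A x y).2
  have f_nonneg : ∀ (A : Set G) (x : G), 0 ≤ f A x := fun A x =>
    integral_nonneg fun y => (gb A x y).1
  -- CONTINUITY of the convolution
  have hFcont : ∀ (A : Set G), MeasurableSet A → Continuous (f A) := by
    intro A hA
    have habs : ∀ (h : G → ℝ), |∫ y, h y ∂μ| ≤ ∫ y, |h y| ∂μ := fun h => by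
      simpa only [Real.norm_eq_abs] using norm_integral_le_integral_norm (μ := μ) h
    letI : UniformSpace G := IsTopologicalAddGroup.rightUniformSpace G
    haveI : IsUniformAddGroup G := isUniformAddGroup_of_addCommGroup
    rw [continuous_iff_continuousAt]
    intro x₀
    rw [ContinuousAt, Metric.tendsto_nhds]
    intro ε hε
    set ε' : ℝ := ε / 6 with hε'def
    have hε' : 0 < ε' := by positivity
    have hε'ne : ENNReal.ofReal ε' ≠ 0 := by
      simp [ENNReal.ofReal_eq_zero, not_le, hε']
    -- regularity: compact inside, open outside
    obtain ⟨K, hKB, hKc, hK⟩ :=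
      hB.exists_isCompact_lt_add (measure_ne_top μ B) hε'ne
    obtain ⟨U, hBU, hUo, hU⟩ :=
      Set.exists_isOpen_lt_add B (measure_ne_top μ B) hε'ne
    set E : Set G := closure K with hEdef
    have hEc : IsCompact E := hKc.closure
    have hEcl : IsClosed E := isClosed_closure
    have hEU : E ⊆ U := hKc.closure_subset_of_isOpen hUo (hKB.trans hBU)
    obtain ⟨g, hg1, hg0, -, hg01⟩ :=
      exists_continuous_one_zero_of_isCompact hEc hUo.isClosed_compl
        (disjoint_compl_right_iff_subset.mpr hEU)
    have gmeasble : Measurable ⇑g := g.continuous.measurable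
    set d : G → ℝ := fun y => B.indicator 1 y - g y with hd
    have hdmeas : Measurable d := (measurable_one.indicator hB).sub gmeasble
    have hdb2 : ∀ y, |d y| ≤ 2 := by
      intro y
      rcases ind01 B y with h | h <;> rcases hg01 y with ⟨h0, h1⟩ <;>
        rw [abs_le] <;> constructor <;> simp only [hd, h] <;> linarith
    have hdbound : ∀ y, |d y| ≤ U.indicator 1 y - (E ∩ B).indicator 1 y := by
      intro y
      by_cases hyEB : y ∈ E ∩ B
      · have hgy : g y = 1 := hg1 hyEB.1
        have hyU : y ∈ U := hBU hyEB.2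
        simp [hd, Set.indicator_of_mem hyEB.2, Set.indicator_of_mem hyU,
          Set.indicator_of_mem hyEB, hgy]
      · by_cases hyU : y ∈ U
        · rw [Set.indicator_of_mem hyU, Set.indicator_of_notMem hyEB]
          rcases ind01 B y with h | h <;> rcases hg01 y with ⟨h0, h1⟩ <;>
            rw [abs_le] <;> constructor <;> simp only [hd, h] <;> norm_num <;> linarith
        · have hgy : g y = 0 := hg0 hyU
          have hyB : y ∉ B := fun h => hyU (hBU h)
          simp [hd, Set.indicator_of_notMem hyB, Set.indicator_of_notMem hyU,
            Set.indicator_of_notMem hyEB, hgy]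
    have hEBmeas : MeasurableSet (E ∩ B) := hEcl.measurableSet.inter hB
    have hL1 : (∫ y, |d y| ∂μ) ≤ 2 * ε' := by
      have hiU : Integrable (U.indicator (1 : G → ℝ)) μ := by
        refine intb _ 1 (measurable_one.indicator hUo.measurableSet) fun y => ?_
        rcases ind01 U y with h | h <;> rw [h] <;> norm_num
      have hiEB : Integrable ((E ∩ B).indicator (1 : G → ℝ)) μ := by
        refine intb _ 1 (measurable_one.indicator hEBmeas) fun y => ?_
        rcases ind01 (E ∩ B) y with h | h <;> rw [h] <;> norm_num
      calc (∫ y, |d y| ∂μ)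
          ≤ ∫ y, (U.indicator 1 y - (E ∩ B).indicator 1 y) ∂μ := by
            refine integral_mono (intb _ 2 hdmeas.abs fun y => by
              simpa using hdb2 y) (hiU.sub hiEB) fun y => hdbound y
        _ = (μ U).toReal - (μ (E ∩ B)).toReal := by
            rw [integral_sub hiU hiEB, integral_indicator_one hUo.measurableSet,
              integral_indicator_one hEBmeas, measureReal_def, measureReal_def]
        _ ≤ 2 * ε' := by
            have h1 : (μ U).toReal ≤ (μ B).toReal + ε' := by
              have h := hU.le
              have := ENNReal.toReal_mono (by finiteness) h
              rwa [ENNReal.toReal_add (measure_ne_top μ B) ENNReal.ofReal_ne_top,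
                ENNReal.toReal_ofReal hε'.le] at this
            have h2 : (μ B).toReal ≤ (μ (E ∩ B)).toReal + ε' := by
              have hKEB : μ K ≤ μ (E ∩ B) :=
                measure_mono (subset_inter subset_closure hKB)
              have h : μ B ≤ μ (E ∩ B) + ENNReal.ofReal ε' :=
                hK.le.trans (add_le_add_left hKEB _)
              have := ENNReal.toReal_mono (by finiteness) h
              rwa [ENNReal.toReal_add (measure_ne_top μ _) ENNReal.ofReal_ne_top,
                ENNReal.toReal_ofReal hε'.le] at this
            linarith
    -- integrability of the smoothed integrand
    have intg : ∀ x : G, Integrable (fun y => A.indicator (1 : G → ℝ) y * g (x - y)) μ := by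
      intro x
      refine intb _ 1 ((measurable_one.indicator hA).mul
        (gmeasble.comp (continuous_const.sub continuous_id).measurable)) fun y => ?_
      rcases ind01 A y with h | h <;> rcases hg01 (x - y) with ⟨h0, h1⟩ <;>
        rw [abs_le, h] <;> constructor <;> linarith
    -- closeness of f A to the smoothed version, uniformly in x
    have hclose : ∀ x : G,
        |f A x - ∫ y, A.indicator (1 : G → ℝ) y * g (x - y) ∂μ| ≤ 2 * ε' := by
      intro x
      have intd : Integrable (fun y => |d (x - y)|) μ := by
        refine intb _ 2 ((hdmeas.comp
          (continuous_const.sub continuous_id).measurable)).abs fun y => by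
            simpa using hdb2 (x - y)
      have key : f A x - (∫ y, A.indicator (1 : G → ℝ) y * g (x - y) ∂μ)
          = ∫ y, A.indicator (1 : G → ℝ) y * d (x - y) ∂μ := by
        rw [hfdef]
        rw [← integral_sub (gint A hA x) (intg x)]
        refine integral_congr_ae (ae_of_all _ fun y => ?_)
        simp only [hd]
        ring
      rw [key]
      calc |∫ y, A.indicator (1 : G → ℝ) y * d (x - y) ∂μ|
          ≤ ∫ y, |A.indicator (1 : G → ℝ) y * d (x - y)| ∂μ := habs _
        _ ≤ ∫ y, |d (x - y)| ∂μ := by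
            refine integral_mono (intb _ 2
              (((measurable_one.indicator hA).mul ((hdmeas.comp
                (continuous_const.sub continuous_id).measurable))).abs)
              fun y => by
                rw [abs_abs, abs_mul]
                rcases ind01 A y with h | h <;> rw [h] <;> simpa using hdb2 (x - y))
              intd fun y => ?_
            rw [abs_mul]
            rcases ind01 A y with h | h <;> rw [h] <;> simp
        _ = ∫ y, |d y| ∂μ := integral_sub_left_eq_self (fun y => |d y|) μ x
        _ ≤ 2 * ε' := hL1
    -- uniform continuity of g
    have hgu : UniformContinuous ⇑g :=
      CompactSpace.uniformContinuous_of_continuous g.continuous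
    have hmem : {p : ℝ × ℝ | dist p.1 p.2 < ε'} ∈ uniformity ℝ := Metric.dist_mem_uniformity hε'
    have hcomap := hgu hmem
    rw [Filter.mem_map, uniformity_eq_comap_nhds_zero G, Filter.mem_comap] at hcomap
    obtain ⟨V, hV, hVsub⟩ := hcomap
    have hten : Filter.Tendsto (fun x => x₀ - x) (nhds x₀) (nhds (0 : G)) := by
      have h : Continuous (fun x : G => x₀ - x) := continuous_const.sub continuous_id
      simpa using h.tendsto x₀
    filter_upwards [hten hV] with x hxV
    -- continuity of the smoothed version
    have hGdiff : |(∫ y, A.indicator (1 : G → ℝ) y * g (x - y) ∂μ)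
        - ∫ y, A.indicator (1 : G → ℝ) y * g (x₀ - y) ∂μ| ≤ ε' := by
      rw [← integral_sub (intg x) (intg x₀)]
      have hpt : ∀ y, |A.indicator (1 : G → ℝ) y * g (x - y)
          - A.indicator (1 : G → ℝ) y * g (x₀ - y)| ≤ ε' := by
        intro y
        have h1 : dist (g (x - y)) (g (x₀ - y)) < ε' := by
          have hm : ((x - y, x₀ - y) : G × G) ∈ (fun p : G × G => p.2 - p.1) ⁻¹' V := by
            have he : (x₀ - y) - (x - y) = x₀ - x := by abel
            simpa [Set.mem_preimage, he] using hxV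
          exact hVsub hm
        rw [Real.dist_eq] at h1
        have heq : A.indicator (1 : G → ℝ) y * g (x - y)
            - A.indicator (1 : G → ℝ) y * g (x₀ - y)
            = A.indicator (1 : G → ℝ) y * (g (x - y) - g (x₀ - y)) := by ring
        rw [heq, abs_mul]
        rcases ind01 A y with h | h <;> rw [h] <;> simp <;> linarith
      calc |∫ y, (A.indicator (1 : G → ℝ) y * g (x - y)
              - A.indicator (1 : G → ℝ) y * g (x₀ - y)) ∂μ|
          ≤ ∫ y, |A.indicator (1 : G → ℝ) y * g (x - y)
              - A.indicator (1 : G → ℝ) y * g (x₀ - y)| ∂μ := habs _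
        _ ≤ ∫ _y, ε' ∂μ := by
            refine integral_mono (((intg x).sub (intg x₀)).abs) (integrable_const _)
              fun y => hpt y
        _ = ε' := by simp
    have h1 := hclose x
    have h2 := hclose x₀
    rw [Real.dist_eq]
    have htri : |f A x - f A x₀| ≤
        |f A x - ∫ y, A.indicator (1 : G → ℝ) y * g (x - y) ∂μ|
        + |(∫ y, A.indicator (1 : G → ℝ) y * g (x - y) ∂μ)
            - ∫ y, A.indicator (1 : G → ℝ) y * g (x₀ - y) ∂μ|
        + |(∫ y, A.indicator (1 : G → ℝ) y * g (x₀ - y) ∂μ) - f A x₀| := by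
      have hh1 := abs_sub_le (f A x) (∫ y, A.indicator (1 : G → ℝ) y * g (x - y) ∂μ) (f A x₀)
      have hh2 := abs_sub_le (∫ y, A.indicator (1 : G → ℝ) y * g (x - y) ∂μ)
        (∫ y, A.indicator (1 : G → ℝ) y * g (x₀ - y) ∂μ) (f A x₀)
      linarith
    have h2' : |(∫ y, A.indicator (1 : G → ℝ) y * g (x₀ - y) ∂μ) - f A x₀| ≤ 2 * ε' := by
      rw [abs_sub_comm]; exact h2
    have : |f A x - f A x₀| ≤ 5 * ε' := by linarith
    have h5 : 5 * ε' < ε := by rw [hε'def]; linarith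
    linarith [abs_nonneg (f A x - f A x₀)]
  have f_meas : ∀ (A : Set G), MeasurableSet A → StronglyMeasurable (f A) := fun A hA =>
    (hFcont A hA).stronglyMeasurable
  have minint : ∀ (A : Set G), MeasurableSet A →
      Integrable (fun x => min (f A x) t) μ := by
    intro A hA
    refine (integrable_const t).mono'
      (((f_meas A hA).measurable.min measurable_const).stronglyMeasurable.aestronglyMeasurable) ?_
    refine ae_of_all _ fun x => ?_
    rw [Real.norm_eq_abs, abs_of_nonneg (le_min (f_nonneg A x) ht)]
    exact min_le_right _ _
  -- pointwise monotonicity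
  have hmono : ∀ (A A' : Set G), MeasurableSet A → MeasurableSet A' → A ⊆ A' →
      ∀ x, f A x ≤ f A' x := by
    intro A A' hA hA' hsub x
    refine integral_mono (gint A hA x) (gint A' hA' x) fun y => ?_
    exact mul_le_mul_of_nonneg_right
      (Set.indicator_le_indicator_of_subset hsub (fun a => zero_le_one) y)
      (Set.indicator_nonneg (fun a _ => zero_le_one) _)
  -- pointwise additivity
  have hsum : ∀ x, f (A₁ ∩ A₂) x + f (A₁ ∪ A₂) x = f A₁ x + f A₂ x := by
    intro x
    rw [hfdef]
    rw [← integral_add (gint _ (hA₁.inter hA₂) x) (gint _ (hA₁.union hA₂) x),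
        ← integral_add (gint _ hA₁ x) (gint _ hA₂ x)]
    refine integral_congr_ae (ae_of_all _ fun y => ?_)
    by_cases h1 : y ∈ A₁ <;> by_cases h2 : y ∈ A₂ <;>
      simp [Set.indicator, h1, h2] <;> ring
  -- integral inequality
  have intineq : (∫ x, min (f (A₁ ∩ A₂) x) t ∂μ) + (∫ x, min (f (A₁ ∪ A₂) x) t ∂μ) ≤
      (∫ x, min (f A₁ x) t ∂μ) + (∫ x, min (f A₂ x) t ∂μ) := by
    rw [← integral_add (minint _ (hA₁.inter hA₂)) (minint _ (hA₁.union hA₂)),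
        ← integral_add (minint _ hA₁) (minint _ hA₂)]
    refine integral_mono ((minint _ (hA₁.inter hA₂)).add (minint _ (hA₁.union hA₂)))
      ((minint _ hA₁).add (minint _ hA₂)) fun x => ?_
    exact min_submodular_aux (hsum x)
      (hmono _ _ (hA₁.inter hA₂) hA₁ Set.inter_subset_left x)
      (hmono _ _ (hA₁.inter hA₂) hA₂ Set.inter_subset_right x)
  -- measure identity
  have key : (μ (A₁ ∩ A₂)).toReal + (μ (A₁ ∪ A₂)).toReal =
      (μ A₁).toReal + (μ A₂).toReal := by
    have h := measure_union_add_inter (μ := μ) A₁ hA₂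
    rw [← ENNReal.toReal_add (measure_ne_top μ _) (measure_ne_top μ _),
        ← ENNReal.toReal_add (measure_ne_top μ _) (measure_ne_top μ _), add_comm
          ((μ (A₁ ∩ A₂))), h]
  rw [hc, hc, hc, hc]
  nlinarith [intineq, key]
end

section
/- Let G be a compact connected abelian group with probability Haar measure μ_G, let A ⊆ G be measurable, and let t be a real number with μ_G(A)² ≤ t ≤ μ_G(A). Then there exists x ∈ G such that μ_G(A ∩ (x + A)) = t. -/
open MeasureTheory Set Pointwise Filter Topology
open scoped symmDiff ENNReal

section Aux

variable {G : Type*} [AddCommGroup G] [TopologicalSpace G] [IsTopologicalAddGroup G]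
  [CompactSpace G]

/-- Uniform continuity of a continuous real function on a compact additive group. -/
private lemma unif_cont (f : G → ℝ) (hf : Continuous f) {ε : ℝ} (hε : 0 < ε) :
    ∃ V ∈ 𝓝 (0 : G), ∀ a b : G, b - a ∈ V → |f b - f a| ≤ ε := by
  letI : UniformSpace G := IsTopologicalAddGroup.rightUniformSpace G
  haveI : IsUniformAddGroup G := isUniformAddGroup_of_addCommGroup
  have huc := CompactSpace.uniformContinuous_of_continuous (f := f) hf
  have hmem : {p : ℝ × ℝ | dist p.1 p.2 < ε} ∈ uniformity ℝ := Metric.dist_mem_uniformity hε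
  have h2 := huc hmem
  rw [uniformity_eq_comap_nhds_zero G] at h2
  rw [mem_map, mem_comap] at h2
  obtain ⟨V, hV, hVsub⟩ := h2
  refine ⟨V, hV, fun a b hab => ?_⟩
  have := hVsub (show ((a, b) : G × G) ∈ _ from hab)
  simp only [Set.mem_preimage, Prod.map, Set.mem_setOf_eq, Real.dist_eq] at this
  rw [abs_sub_comm]
  exact this.le

/-- A continuous partition of unity subordinate to translates of a neighborhood of `0`. -/
private lemma partition_of_unity {V : Set G} (hV : V ∈ 𝓝 (0 : G)) :
    ∃ (s : Finset G) (h : G → G → ℝ), (∀ z, Continuous (h z)) ∧ (∀ z x, 0 ≤ h z x) ∧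
      (∀ x, ∑ z ∈ s, h z x = 1) ∧ (∀ z x, h z x ≠ 0 → x - z ∈ V) := by
  have hV₀ : interior V ∈ 𝓝 (0 : G) := interior_mem_nhds.2 hV
  obtain ⟨C, hC, hCcl, hCV⟩ := exists_mem_nhds_isClosed_subset hV₀
  set W := interior C with hW
  have hWnhds : W ∈ 𝓝 (0 : G) := interior_mem_nhds.2 hC
  have hWopen : IsOpen W := isOpen_interior
  obtain ⟨s, hs⟩ := isCompact_univ.elim_finite_subcover (fun z : G => z +ᵥ W)
    (fun z => hWopen.vadd z) (fun x _ => Set.mem_iUnion.2 ⟨x, by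
      simpa using Set.vadd_mem_vadd_set (a := x) (mem_of_mem_nhds hWnhds)⟩)
  have hcl : ∀ z : G, closure (z +ᵥ W) ⊆ z +ᵥ interior V := by
    intro z
    rw [closure_vadd]
    refine Set.vadd_set_mono ?_
    exact (closure_minimal interior_subset hCcl).trans hCV
  have hury : ∀ z : G, ∃ φ : C(G, ℝ), Set.EqOn φ 1 (closure (z +ᵥ W)) ∧
      Set.EqOn φ 0 (z +ᵥ interior V)ᶜ ∧ HasCompactSupport φ ∧ ∀ x, φ x ∈ Set.Icc 0 1 := by
    intro z
    exact exists_continuous_one_zero_of_isCompact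
      (isClosed_closure.isCompact) (isOpen_interior.vadd z).isClosed_compl
      (disjoint_compl_right.mono_left (hcl z))
  choose φ hφ1 hφ0 _ hφ01 using hury
  set S : G → ℝ := fun x => ∑ z ∈ s, φ z x with hS
  have hScont : Continuous S := continuous_finset_sum _ fun z _ => (φ z).continuous
  have hS1 : ∀ x, 1 ≤ S x := by
    intro x
    obtain ⟨z, hzs, hxz⟩ := Set.mem_iUnion₂.1 (hs (Set.mem_univ x))
    calc (1 : ℝ) = φ z x := (hφ1 z (subset_closure hxz)).symm
      _ ≤ S x := Finset.single_le_sum (f := fun z => φ z x)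
          (fun i _ => (hφ01 i x).1) hzs
  have hSne : ∀ x, S x ≠ 0 := fun x => by linarith [hS1 x]
  refine ⟨s, fun z x => φ z x / S x, fun z => (φ z).continuous.div hScont hSne,
    fun z x => div_nonneg (hφ01 z x).1 (le_trans zero_le_one (hS1 x)), fun x => ?_, ?_⟩
  · rw [← Finset.sum_div, div_eq_one_iff_eq (hSne x)]
  · intro z x hzx
    have hφne : φ z x ≠ 0 := fun h => hzx (by simp [h])
    have hxmem : x ∈ z +ᵥ interior V := by
      by_contra h
      exact hφne (hφ0 z h)
    have := Set.mem_vadd_set_iff_neg_vadd_mem.1 hxmem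
    simpa [vadd_eq_add, sub_eq_neg_add, add_comm] using interior_subset this

variable [MeasurableSpace G] [BorelSpace G]
  (μ : Measure G) [μ.IsAddHaarMeasure] [IsProbabilityMeasure μ]

private lemma intg (F : G → ℝ) (hF : Continuous F) : Integrable F μ :=
  hF.integrable_of_hasCompactSupport (HasCompactSupport.of_compactSpace F)

/-- Translation invariance of the integral under `x ↦ y - x`. -/
private lemma integral_sub_left (f : G → ℝ) (y : G) :
    ∫ x, f (y - x) ∂μ = ∫ w, f w ∂μ := by
  have hmp : MeasurePreserving (fun x : G => y + -x) μ μ :=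
    (measurePreserving_add_left μ y).comp (Measure.measurePreserving_neg μ)
  have he : MeasurableEmbedding (fun x : G => y + -x) :=
    (((Homeomorph.neg G).trans (Homeomorph.addLeft y)).toMeasurableEquiv).measurableEmbedding
  simp_rw [sub_eq_add_neg]
  exact hmp.integral_comp he f

/-- The key mean-value bound for continuous functions, proved by hand with a
partition of unity (no product measurability needed). -/
private lemma exists_autocorrelation_le (f : G → ℝ) (hf : Continuous f)
    (hf0 : ∀ x, 0 ≤ f x) (hf1 : ∀ x, f x ≤ 1) :
    ∃ x : G, ∫ y, f y * f (y - x) ∂μ ≤ (∫ y, f y ∂μ) ^ 2 := by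
  set I : G → ℝ := fun x => ∫ y, f y * f (y - x) ∂μ with hI
  have hcsub : ∀ x : G, Continuous fun y : G => f (y - x) :=
    fun x => hf.comp (continuous_id.sub continuous_const)
  have hcsub' : ∀ y : G, Continuous fun x : G => f (y - x) :=
    fun y => hf.comp (continuous_const.sub continuous_id)
  have hfin : ∫ y, f y ∂μ ≤ 1 := by
    calc ∫ y, f y ∂μ ≤ ∫ _, (1 : ℝ) ∂μ :=
          integral_mono (intg μ f hf) (integrable_const 1) hf1
      _ = 1 := by simp
  have hfnn : 0 ≤ ∫ y, f y ∂μ := integral_nonneg hf0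
  -- continuity of I
  have hIcont : Continuous I := by
    rw [continuous_iff_continuousAt]
    intro x₀
    rw [ContinuousAt, Metric.tendsto_nhds]
    intro ε hε
    obtain ⟨V, hV, hVf⟩ := unif_cont f hf (half_pos hε)
    have hnhds : {x : G | x₀ - x ∈ V} ∈ 𝓝 x₀ := by
      have hcm : ContinuousAt (fun x : G => x₀ - x) x₀ :=
        (continuous_const.sub continuous_id).continuousAt
      have : (fun x : G => x₀ - x) ⁻¹' V ∈ 𝓝 x₀ := hcm (by simpa using hV)
      exact this
    filter_upwards [hnhds] with x hx
    have hb : ∀ y : G, |f y * f (y - x) - f y * f (y - x₀)| ≤ ε / 2 := by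
      intro y
      have h1 : |f (y - x) - f (y - x₀)| ≤ ε / 2 := by
        have habel : (y - x) - (y - x₀) = x₀ - x := by abel
        exact hVf (y - x₀) (y - x) (by rw [habel]; exact hx)
      calc |f y * f (y - x) - f y * f (y - x₀)| = |f y| * |f (y - x) - f (y - x₀)| := by
            rw [← abs_mul]; ring_nf
        _ ≤ 1 * (ε / 2) := by
            refine mul_le_mul ?_ h1 (abs_nonneg _) zero_le_one
            rw [abs_of_nonneg (hf0 y)]; exact hf1 y
        _ = ε / 2 := one_mul _
    have hdist : dist (I x) (I x₀) ≤ ε / 2 := by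
      rw [Real.dist_eq, hI]
      beta_reduce
      rw [← integral_sub (intg μ (fun y => f y * f (y - x)) (hf.mul (hcsub x)))
        (intg μ (fun y => f y * f (y - x₀)) (hf.mul (hcsub x₀)))]
      calc |∫ y, (f y * f (y - x) - f y * f (y - x₀)) ∂μ|
          ≤ ∫ y, |f y * f (y - x) - f y * f (y - x₀)| ∂μ := by
            simpa [Real.norm_eq_abs] using
              norm_integral_le_integral_norm (fun y => f y * f (y - x) - f y * f (y - x₀))
        _ ≤ ∫ _, (ε / 2 : ℝ) ∂μ := by
            refine integral_mono ?_ (integrable_const _) hb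
            exact (intg μ _ ((hf.mul (hcsub x)).sub (hf.mul (hcsub x₀)))).abs
        _ = ε / 2 := by simp
    exact lt_of_le_of_lt hdist (half_lt_self hε)
  -- main bound on the integral of I
  have hmain : ∫ x, I x ∂μ ≤ (∫ y, f y ∂μ) ^ 2 := by
    refine le_of_forall_pos_le_add ?_
    intro ε hε
    obtain ⟨V, hV, hVf⟩ := unif_cont f hf (show (0:ℝ) < ε / 3 by linarith)
    set ε₀ := ε / 3 with hε₀
    obtain ⟨s, h, hhcont, hhnn, hhsum, hhsupp⟩ := partition_of_unity hV
    -- pointwise bound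
    have P1 : ∀ x y : G, |f (y - x) - ∑ z ∈ s, h z x * f (y - z)| ≤ ε₀ := by
      intro x y
      have hrw : f (y - x) - ∑ z ∈ s, h z x * f (y - z)
          = ∑ z ∈ s, h z x * (f (y - x) - f (y - z)) := by
        simp only [mul_sub, Finset.sum_sub_distrib, ← Finset.sum_mul, hhsum x, one_mul]
      rw [hrw]
      refine (Finset.abs_sum_le_sum_abs _ _).trans ?_
      have : ∀ z ∈ s, |h z x * (f (y - x) - f (y - z))| ≤ h z x * ε₀ := by
        intro z _
        rw [abs_mul, abs_of_nonneg (hhnn z x)]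
        by_cases hz : h z x = 0
        · simp [hz]
        · refine mul_le_mul_of_nonneg_left ?_ (hhnn z x)
          have hmem : x - z ∈ V := hhsupp z x hz
          have := hVf (y - x) (y - z) (by rw [show (y - z) - (y - x) = x - z by abel]; exact hmem)
          rwa [abs_sub_comm] at this
      refine (Finset.sum_le_sum this).trans ?_
      rw [← Finset.sum_mul, hhsum x, one_mul]
    -- expand sums under integrals
    have hsum_int : ∀ x : G, ∫ y, f y * ∑ z ∈ s, h z x * f (y - z) ∂μ
        = ∑ z ∈ s, h z x * I z := by
      intro x
      have : (fun y => f y * ∑ z ∈ s, h z x * f (y - z))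
          = fun y => ∑ z ∈ s, h z x * (f y * f (y - z)) := by
        funext y
        rw [Finset.mul_sum]
        exact Finset.sum_congr rfl fun z _ => by ring
      rw [this, integral_finset_sum _ fun z _ => ((intg μ (fun y => f y * f (y - z)) (hf.mul (hcsub z))).const_mul _)]
      exact Finset.sum_congr rfl fun z _ => integral_const_mul _ _
    -- Step 1 : I x ≤ ∑ h z x * I z + ε₀
    have step1 : ∀ x : G, I x ≤ (∑ z ∈ s, h z x * I z) + ε₀ := by
      intro x
      rw [← hsum_int x]
      have hb : ∀ y : G, f y * f (y - x) ≤ f y * (∑ z ∈ s, h z x * f (y - z)) + ε₀ := by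
        intro y
        have h1 : f y * f (y - x) - f y * (∑ z ∈ s, h z x * f (y - z)) ≤ ε₀ := by
          calc f y * f (y - x) - f y * (∑ z ∈ s, h z x * f (y - z))
              = f y * (f (y - x) - ∑ z ∈ s, h z x * f (y - z)) := by ring
            _ ≤ |f y * (f (y - x) - ∑ z ∈ s, h z x * f (y - z))| := le_abs_self _
            _ = |f y| * |f (y - x) - ∑ z ∈ s, h z x * f (y - z)| := abs_mul _ _
            _ ≤ 1 * ε₀ := by
                refine mul_le_mul ?_ (P1 x y) (abs_nonneg _) zero_le_one
                rw [abs_of_nonneg (hf0 y)]; exact hf1 y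
            _ = ε₀ := one_mul _
        linarith
      have hcsum : Continuous fun y => f y * ∑ z ∈ s, h z x * f (y - z) :=
        hf.mul (continuous_finset_sum _ fun z _ => continuous_const.mul (hcsub z))
      calc I x ≤ ∫ y, (f y * (∑ z ∈ s, h z x * f (y - z)) + ε₀) ∂μ :=
            integral_mono (intg μ _ (hf.mul (hcsub x)))
              ((intg μ _ hcsum).add (integrable_const _)) hb
        _ = (∫ y, f y * ∑ z ∈ s, h z x * f (y - z) ∂μ) + ε₀ := by
            rw [integral_add (intg μ _ hcsum) (integrable_const _)]; simp
    -- Step 2 : integrate step 1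
    have hczcont : Continuous fun x => ∑ z ∈ s, h z x * I z :=
      continuous_finset_sum _ fun z _ => (hhcont z).mul continuous_const
    have step2 : ∫ x, I x ∂μ ≤ (∑ z ∈ s, (∫ x, h z x ∂μ) * I z) + ε₀ := by
      calc ∫ x, I x ∂μ ≤ ∫ x, ((∑ z ∈ s, h z x * I z) + ε₀) ∂μ :=
            integral_mono (intg μ I hIcont)
              ((intg μ _ hczcont).add (integrable_const _)) step1
        _ = (∑ z ∈ s, (∫ x, h z x ∂μ) * I z) + ε₀ := by
            rw [integral_add (intg μ _ hczcont) (integrable_const _),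
              integral_finset_sum _ fun z _ => (intg μ _ (hhcont z)).mul_const _]
            simp only [integral_mul_const]
            simp
    -- Step 3 : the sum is close to (∫ f)²
    have step3 : ∑ z ∈ s, (∫ x, h z x ∂μ) * I z ≤ (∫ y, f y ∂μ) ^ 2 + ε₀ := by
      have hexp : ∑ z ∈ s, (∫ x, h z x ∂μ) * I z
          = ∫ y, f y * ∑ z ∈ s, (∫ x, h z x ∂μ) * f (y - z) ∂μ := by
        have : (fun y => f y * ∑ z ∈ s, (∫ x, h z x ∂μ) * f (y - z))
            = fun y => ∑ z ∈ s, (∫ x, h z x ∂μ) * (f y * f (y - z)) := by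
          funext y
          rw [Finset.mul_sum]
          exact Finset.sum_congr rfl fun z _ => by ring
        rw [this, integral_finset_sum _ fun z _ => ((intg μ (fun y => f y * f (y - z)) (hf.mul (hcsub z))).const_mul _)]
        exact (Finset.sum_congr rfl fun z _ => (integral_const_mul _ _).symm)
      have hptw : ∀ y : G, ∑ z ∈ s, (∫ x, h z x ∂μ) * f (y - z) ≤ (∫ w, f w ∂μ) + ε₀ := by
        intro y
        have hswap : ∑ z ∈ s, (∫ x, h z x ∂μ) * f (y - z)
            = ∫ x, ∑ z ∈ s, h z x * f (y - z) ∂μ := by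
          rw [integral_finset_sum _ fun z _ => (intg μ _ (hhcont z)).mul_const _]
          exact (Finset.sum_congr rfl fun z _ => (integral_mul_const _ _).symm)
        have hb : ∀ x : G, ∑ z ∈ s, h z x * f (y - z) ≤ f (y - x) + ε₀ := by
          intro x
          have := P1 x y
          have h2 : -(ε₀) ≤ f (y - x) - ∑ z ∈ s, h z x * f (y - z) := neg_le_of_abs_le this
          linarith
        have hcs : Continuous fun x => ∑ z ∈ s, h z x * f (y - z) :=
          continuous_finset_sum _ fun z _ => (hhcont z).mul continuous_const
        calc ∑ z ∈ s, (∫ x, h z x ∂μ) * f (y - z)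
            = ∫ x, ∑ z ∈ s, h z x * f (y - z) ∂μ := hswap
          _ ≤ ∫ x, (f (y - x) + ε₀) ∂μ :=
              integral_mono (intg μ _ hcs) ((intg μ _ (hcsub' y)).add (integrable_const _)) hb
          _ = (∫ w, f w ∂μ) + ε₀ := by
              rw [integral_add (intg μ _ (hcsub' y)) (integrable_const _),
                integral_sub_left μ f y]
              simp
      have hcs2 : Continuous fun y => f y * ∑ z ∈ s, (∫ x, h z x ∂μ) * f (y - z) :=
        hf.mul (continuous_finset_sum _ fun z _ => continuous_const.mul (hcsub z))
      calc ∑ z ∈ s, (∫ x, h z x ∂μ) * I z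
          = ∫ y, f y * ∑ z ∈ s, (∫ x, h z x ∂μ) * f (y - z) ∂μ := hexp
        _ ≤ ∫ y, f y * ((∫ w, f w ∂μ) + ε₀) ∂μ := by
            refine integral_mono (intg μ _ hcs2) ((intg μ f hf).mul_const _) ?_
            intro y
            exact mul_le_mul_of_nonneg_left (hptw y) (hf0 y)
        _ = (∫ y, f y ∂μ) * ((∫ w, f w ∂μ) + ε₀) := integral_mul_const _ _
        _ = (∫ y, f y ∂μ) ^ 2 + (∫ y, f y ∂μ) * ε₀ := by ring
        _ ≤ (∫ y, f y ∂μ) ^ 2 + ε₀ := by nlinarith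
    calc ∫ x, I x ∂μ ≤ (∑ z ∈ s, (∫ x, h z x ∂μ) * I z) + ε₀ := step2
      _ ≤ (∫ y, f y ∂μ) ^ 2 + ε₀ + ε₀ := by linarith
      _ ≤ (∫ y, f y ∂μ) ^ 2 + ε := by rw [hε₀]; linarith
  obtain ⟨x, hx⟩ := exists_le_integral (μ := μ) (f := I) (intg μ I hIcont)
  exact ⟨x, hx.trans hmain⟩

end Aux

private lemma abs_toReal_measure_inter_sub_le {G : Type*} [MeasurableSpace G]
    (μ : Measure G) [IsFiniteMeasure μ] (s u v : Set G) :
    |(μ (s ∩ u)).toReal - (μ (s ∩ v)).toReal| ≤ (μ (u ∆ v)).toReal := by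
  have key : ∀ u v : Set G, (μ (s ∩ u)).toReal ≤ (μ (s ∩ v)).toReal + (μ (u ∆ v)).toReal := by
    intro u v
    have hsub : s ∩ u ⊆ (s ∩ v) ∪ (u ∆ v) := by
      intro y hy
      by_cases h : y ∈ v
      · exact Or.inl ⟨hy.1, h⟩
      · exact Or.inr (Set.mem_symmDiff.2 (Or.inl ⟨hy.2, h⟩))
    calc (μ (s ∩ u)).toReal ≤ (μ (s ∩ v) + μ (u ∆ v)).toReal := by
          refine ENNReal.toReal_mono ?_ ((measure_mono hsub).trans (measure_union_le _ _))
          exact ENNReal.add_ne_top.2 ⟨measure_ne_top μ _, measure_ne_top μ _⟩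
      _ ≤ _ := ENNReal.toReal_add_le
  rw [abs_sub_le_iff]
  constructor
  · linarith [key u v]
  · have := key v u
    rw [symmDiff_comm] at this
    linarith

theorem exists_translate_inter_measure {G : Type*} [AddCommGroup G] [TopologicalSpace G]
    [IsTopologicalAddGroup G] [CompactSpace G] [ConnectedSpace G]
    [MeasurableSpace G] [BorelSpace G]
    (μ : Measure G) [μ.IsAddHaarMeasure] [IsProbabilityMeasure μ]
    (A : Set G) (hA : MeasurableSet A)
    (t : ℝ) (ht1 : (μ A).toReal ^ 2 ≤ t) (ht2 : t ≤ (μ A).toReal) :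
    ∃ x : G, (μ (A ∩ (x +ᵥ A))).toReal = t := by
  set g : G → ℝ := fun x => (μ (A ∩ (x +ᵥ A))).toReal with hg
  have hpre : ∀ x : G, x +ᵥ A = (fun y => y + -x) ⁻¹' A := by
    intro x
    ext y
    simp [Set.mem_vadd_set_iff_neg_vadd_mem, add_comm]
  have hAx : ∀ x : G, MeasurableSet (x +ᵥ A) := fun x => hA.const_vadd x
  -- continuity of g
  have hF : Continuous fun p : G × G => p.2 + -p.1 := by continuity
  have hcont : Continuous g := by
    rw [continuous_iff_continuousAt]
    intro x₀
    have htend : Tendsto (fun x => μ ((x +ᵥ A) ∆ (x₀ +ᵥ A))) (𝓝 x₀) (𝓝 0) := by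
      have h := tendsto_measure_symmDiff_preimage_nhds_zero (μ := μ) (ν := μ)
        (l := 𝓝 x₀) (f := fun x => (ContinuousMap.mk _ hF).curry x)
        (g := (ContinuousMap.mk _ hF).curry x₀) (s := A)
        ((ContinuousMap.mk _ hF).curry.continuous.tendsto x₀)
        (Eventually.of_forall fun x => measurePreserving_add_right μ (-x))
        (measurePreserving_add_right μ (-x₀)) hA.nullMeasurableSet (measure_ne_top μ A)
      convert h using 2 with x
      rw [hpre x, hpre x₀]
      rfl
    have hb : Tendsto (fun x => (μ ((x +ᵥ A) ∆ (x₀ +ᵥ A))).toReal) (𝓝 x₀) (𝓝 0) := by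
      simpa [Function.comp_def] using (ENNReal.tendsto_toReal (a := 0) (by simp)).comp htend
    rw [ContinuousAt, tendsto_iff_dist_tendsto_zero]
    refine squeeze_zero (fun x => dist_nonneg) (fun x => ?_) hb
    rw [Real.dist_eq]
    exact abs_toReal_measure_inter_sub_le μ A _ _
  set c : ℝ := (μ A).toReal with hc
  have hc0 : 0 ≤ c := ENNReal.toReal_nonneg
  have hc1 : c ≤ 1 := by
    rw [hc]
    exact ENNReal.toReal_le_of_le_ofReal zero_le_one (by simpa using prob_le_one (μ := μ) (s := A))
  -- Step H : for every ε > 0 there is x with g x ≤ c ^ 2 + ε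
  have stepH : ∀ ε : ℝ, 0 < ε → ∃ x : G, g x ≤ c ^ 2 + ε := by
    intro ε hε
    set δ : ℝ := min 1 (ε / 6) with hδdef
    have hδpos : 0 < δ := lt_min one_pos (by linarith)
    have hδ1 : δ ≤ 1 := min_le_left _ _
    have hδε : 6 * δ ≤ ε := by
      have := min_le_right 1 (ε / 6)
      have : δ ≤ ε / 6 := this
      linarith
    have hδne : (ENNReal.ofReal δ) ≠ 0 := by
      simp [ENNReal.ofReal_eq_zero, not_le, hδpos]
    -- inner approximation by a closed (hence compact, measurable) set
    obtain ⟨K, hKA, hKcl, hKlt⟩ := hA.exists_isClosed_lt_add (measure_ne_top μ A) hδne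
    have hKmeas : MeasurableSet K := hKcl.measurableSet
    have hKdiff : μ (A \ K) ≤ ENNReal.ofReal δ := by
      rw [measure_diff hKA hKmeas.nullMeasurableSet (measure_ne_top μ K)]
      exact tsub_le_iff_right.2 (by rw [add_comm]; exact hKlt.le)
    -- outer approximation by an open set
    obtain ⟨U, hKU, hUopen, hUlt⟩ := exists_isOpen_lt_of_lt K (μ K + ENNReal.ofReal δ)
      (ENNReal.lt_add_right (measure_ne_top μ K) hδne)
    -- Urysohn function
    obtain ⟨f, hf1, hf0, -, hf01⟩ := exists_continuous_one_zero_of_isCompact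
      (IsClosed.isCompact hKcl) hUopen.isClosed_compl (disjoint_compl_right.mono_left hKU)
    have hfnn : ∀ x, 0 ≤ f x := fun x => (hf01 x).1
    have hfle : ∀ x, f x ≤ 1 := fun x => (hf01 x).2
    -- ∫ f ≤ c + δ
    have hfint : ∫ y, f y ∂μ ≤ c + δ := by
      have h1 : ∫ y, f y ∂μ ≤ (μ U).toReal := by
        have hle : ∀ y, f y ≤ U.indicator (fun _ => (1 : ℝ)) y := by
          intro y
          by_cases hy : y ∈ U
          · simp [Set.indicator_of_mem hy, hfle y]
          · have : f y = 0 := hf0 hy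
            simp [Set.indicator_of_notMem hy, this]
        calc ∫ y, f y ∂μ ≤ ∫ y, U.indicator (fun _ => (1 : ℝ)) y ∂μ :=
              integral_mono (intg μ f f.continuous)
                ((integrable_const (1 : ℝ)).indicator hUopen.measurableSet) hle
          _ = (μ U).toReal := by
              rw [integral_indicator_const _ hUopen.measurableSet]; simp [Measure.real]
      have h2 : (μ U).toReal ≤ (μ K).toReal + δ := by
        have := ENNReal.toReal_mono (by finiteness) hUlt.le
        rwa [ENNReal.toReal_add (measure_ne_top μ K) ENNReal.ofReal_ne_top,
          ENNReal.toReal_ofReal hδpos.le] at this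
      have h3 : (μ K).toReal ≤ c := ENNReal.toReal_mono (measure_ne_top μ A) (measure_mono hKA)
      linarith
    -- apply the mean value bound
    obtain ⟨x, hx⟩ := exists_autocorrelation_le μ f f.continuous hfnn hfle
    refine ⟨x, ?_⟩
    -- μ (K ∩ (x +ᵥ K)) ≤ I x
    have hKK : (μ (K ∩ (x +ᵥ K))).toReal ≤ ∫ y, f y * f (y - x) ∂μ := by
      have hmeas : MeasurableSet (K ∩ (x +ᵥ K)) := hKmeas.inter (hKmeas.const_vadd x)
      have hle : ∀ y, (K ∩ (x +ᵥ K)).indicator (fun _ => (1 : ℝ)) y ≤ f y * f (y - x) := by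
        intro y
        by_cases hy : y ∈ K ∩ (x +ᵥ K)
        · have h1 : f y = 1 := hf1 hy.1
          have h2 : f (y - x) = 1 := by
            have := Set.mem_vadd_set_iff_neg_vadd_mem.1 hy.2
            have hyx : y - x ∈ K := by
              simpa [vadd_eq_add, sub_eq_neg_add, add_comm] using this
            exact hf1 hyx
          simp [Set.indicator_of_mem hy, h1, h2]
        · simp only [Set.indicator_of_notMem hy]
          exact mul_nonneg (hfnn y) (hfnn _)
      calc (μ (K ∩ (x +ᵥ K))).toReal
          = ∫ y, (K ∩ (x +ᵥ K)).indicator (fun _ => (1 : ℝ)) y ∂μ := by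
            rw [integral_indicator_const _ hmeas]; simp [Measure.real]
        _ ≤ ∫ y, f y * f (y - x) ∂μ :=
            integral_mono ((integrable_const (1 : ℝ)).indicator hmeas)
              (intg μ _ (f.continuous.mul
                (f.continuous.comp (continuous_id.sub continuous_const)))) hle
    -- μ (A ∩ (x +ᵥ A)) ≤ μ (K ∩ (x +ᵥ K)) + 2δ
    have hAK : g x ≤ (μ (K ∩ (x +ᵥ K))).toReal + 2 * δ := by
      have hsub : A ∩ (x +ᵥ A) ⊆ (K ∩ (x +ᵥ K)) ∪ ((A \ K) ∪ (x +ᵥ (A \ K))) := by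
        intro y hy
        by_cases h1 : y ∈ K
        · by_cases h2 : y ∈ x +ᵥ K
          · exact Or.inl ⟨h1, h2⟩
          · refine Or.inr (Or.inr ?_)
            rw [Set.mem_vadd_set_iff_neg_vadd_mem]
            refine ⟨Set.mem_vadd_set_iff_neg_vadd_mem.1 hy.2, ?_⟩
            intro hk
            exact h2 (Set.mem_vadd_set_iff_neg_vadd_mem.2 hk)
        · exact Or.inr (Or.inl ⟨hy.1, h1⟩)
      have hmb : μ (A ∩ (x +ᵥ A)) ≤ μ (K ∩ (x +ᵥ K)) + (ENNReal.ofReal δ + ENNReal.ofReal δ) := by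
        calc μ (A ∩ (x +ᵥ A)) ≤ μ ((K ∩ (x +ᵥ K)) ∪ ((A \ K) ∪ (x +ᵥ (A \ K)))) :=
              measure_mono hsub
          _ ≤ μ (K ∩ (x +ᵥ K)) + μ ((A \ K) ∪ (x +ᵥ (A \ K))) := measure_union_le _ _
          _ ≤ μ (K ∩ (x +ᵥ K)) + (μ (A \ K) + μ (x +ᵥ (A \ K))) := by
              exact add_le_add le_rfl (measure_union_le _ _)
          _ ≤ μ (K ∩ (x +ᵥ K)) + (ENNReal.ofReal δ + ENNReal.ofReal δ) := by
              refine add_le_add le_rfl (add_le_add hKdiff ?_)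
              rw [measure_vadd]
              exact hKdiff
      calc g x ≤ (μ (K ∩ (x +ᵥ K)) + (ENNReal.ofReal δ + ENNReal.ofReal δ)).toReal :=
            ENNReal.toReal_mono (by finiteness) hmb
        _ ≤ (μ (K ∩ (x +ᵥ K))).toReal + ((ENNReal.ofReal δ).toReal + (ENNReal.ofReal δ).toReal) := by
            refine ENNReal.toReal_add_le.trans ?_
            gcongr
            exact ENNReal.toReal_add_le
        _ = (μ (K ∩ (x +ᵥ K))).toReal + 2 * δ := by
            rw [ENNReal.toReal_ofReal hδpos.le]; ring
    -- conclude
    have hI2 : (∫ y, f y ∂μ) ^ 2 ≤ (c + δ) ^ 2 := by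
      have h0 : 0 ≤ ∫ y, f y ∂μ := integral_nonneg hfnn
      nlinarith
    have : g x ≤ (c + δ) ^ 2 + 2 * δ := by linarith
    have hfinal : (c + δ) ^ 2 + 2 * δ ≤ c ^ 2 + ε := by nlinarith
    linarith
  -- extract a point with g x ≤ c ^ 2 by compactness
  have hex : ∃ x : G, g x ≤ c ^ 2 := by
    set C : ℕ → Set G := fun n => {x | g x ≤ c ^ 2 + 1 / (n + 1)} with hC
    have hsub : ∀ n, C (n + 1) ⊆ C n := by
      intro n x hx
      have h1 : (1 : ℝ) / (↑(n + 1) + 1) ≤ 1 / (↑n + 1) := by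
        refine one_div_le_one_div_of_le (by positivity) ?_
        push_cast; linarith
      simp only [hC, Set.mem_setOf_eq] at hx ⊢
      calc g x ≤ c ^ 2 + 1 / (↑(n + 1) + 1) := hx
        _ ≤ c ^ 2 + 1 / (↑n + 1) := by linarith
    have hne : ∀ n, (C n).Nonempty := by
      intro n
      obtain ⟨x, hx⟩ := stepH (1 / (n + 1)) (by positivity)
      exact ⟨x, hx⟩
    have hclosed : ∀ n, IsClosed (C n) := fun n => isClosed_le hcont continuous_const
    obtain ⟨x, hx⟩ := IsCompact.nonempty_iInter_of_sequence_nonempty_isCompact_isClosed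
      C hsub hne ((hclosed 0).isCompact) hclosed
    refine ⟨x, ?_⟩
    refine le_of_forall_pos_le_add ?_
    intro ε hε
    obtain ⟨n, hn⟩ := exists_nat_one_div_lt hε
    have := Set.mem_iInter.1 hx n
    simp only [hC, Set.mem_setOf_eq] at this
    calc g x ≤ c ^ 2 + 1 / (n + 1) := this
      _ ≤ c ^ 2 + ε := by linarith
  obtain ⟨x₁, hx₁⟩ := hex
  have h0 : g 0 = c := by simp [hg, hc]
  have hmem : t ∈ Set.Icc (g x₁) (g 0) := ⟨hx₁.trans ht1, h0 ▸ ht2⟩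
  obtain ⟨x, -, hx⟩ := isPreconnected_univ.intermediate_value (Set.mem_univ x₁)
    (Set.mem_univ 0) hcont.continuousOn hmem
  exact ⟨x, hx⟩
end

section
/- Let G be a compact abelian group, φ : G → ℝ/ℤ a continuous surjective group homomorphism, and I, J compact arcs in ℝ/ℤ. Then φ⁻¹(I) + φ⁻¹(J) = φ⁻¹(I + J), and μ_G(φ⁻¹(I)) = μ_{ℝ/ℤ}(I), μ_G(φ⁻¹(J)) = μ_{ℝ/ℤ}(J), and μ_G(φ⁻¹(I) + φ⁻¹(J)) = μ_{ℝ/ℤ}(I + J). In particular, if μ_{ℝ/ℤ}(I) + μ_{ℝ/ℤ}(J) ≤ 1 then μ_G(φ⁻¹(I) + φ⁻¹(J)) = μ_G(φ⁻¹(I)) + μ_G(φ⁻¹(J)), so equality holds in Kneser's inequality for parallel Bohr sets. -/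
open MeasureTheory Set Pointwise

private lemma icc_add_icc_real {a b c d : ℝ} (hab : a ≤ b) (hcd : c ≤ d) :
    Icc a b + Icc c d = Icc (a + c) (b + d) := by
  apply Subset.antisymm
  · rintro x ⟨y, hy, z, hz, rfl⟩
    exact ⟨add_le_add hy.1 hz.1, add_le_add hy.2 hz.2⟩
  · rintro x ⟨h1, h2⟩
    refine ⟨min b (x - c), ⟨le_min hab (by linarith), min_le_left _ _⟩,
      x - min b (x - c), ⟨?_, ?_⟩, by ring⟩
    · rcases le_total b (x - c) with h' | h' <;> simp [min_eq_left, min_eq_right, h'] <;> linarith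
    · rcases le_total b (x - c) with h' | h' <;> simp [min_eq_left, min_eq_right, h'] <;> linarith

private lemma image_Icc_eq_closedBall (a b : ℝ) :
    (fun x : ℝ => (x : UnitAddCircle)) '' Icc a b
      = Metric.closedBall (((a + b) / 2 : ℝ) : UnitAddCircle) ((b - a) / 2) := by
  have hsurj : Function.Surjective (fun x : ℝ => (x : UnitAddCircle)) :=
    QuotientAddGroup.mk_surjective
  rw [← Set.image_preimage_eq (Metric.closedBall _ _) hsurj]
  rw [show (fun x : ℝ => (x : UnitAddCircle)) ⁻¹' Metric.closedBall _ _ =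
        ⋃ z : ℤ, Metric.closedBall ((a + b) / 2 + z • (1 : ℝ)) ((b - a) / 2) from
    AddCircle.coe_real_preimage_closedBall_eq_iUnion _ _ _, Set.image_iUnion]
  have key : ∀ z : ℤ, (fun x : ℝ => (x : UnitAddCircle)) ''
      Metric.closedBall ((a + b) / 2 + z • (1 : ℝ)) ((b - a) / 2)
      = (fun x : ℝ => (x : UnitAddCircle)) '' Icc a b := by
    intro z
    rw [Real.closedBall_eq_Icc]
    have h1 : (a + b) / 2 + z • (1 : ℝ) - (b - a) / 2 = a + z := by
      rw [zsmul_eq_mul, mul_one]; ring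
    have h2 : (a + b) / 2 + z • (1 : ℝ) + (b - a) / 2 = b + z := by
      rw [zsmul_eq_mul, mul_one]; ring
    have hz0 : ((z : ℝ) : UnitAddCircle) = 0 :=
      (AddCircle.coe_eq_zero_iff (1:ℝ)).mpr ⟨z, by simp⟩
    rw [h1, h2]
    ext x
    simp only [mem_image]
    constructor
    · rintro ⟨y, hy, rfl⟩
      refine ⟨y - z, ⟨by linarith [hy.1], by linarith [hy.2]⟩, ?_⟩
      show (↑(y - (z:ℝ)) : UnitAddCircle) = ↑y
      rw [QuotientAddGroup.mk_sub, hz0, sub_zero]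
    · rintro ⟨y, hy, rfl⟩
      refine ⟨y + z, ⟨by linarith [hy.1], by linarith [hy.2]⟩, ?_⟩
      show (↑(y + (z:ℝ)) : UnitAddCircle) = ↑y
      rw [QuotientAddGroup.mk_add, hz0, add_zero]
  simp only [key, iUnion_const]

private lemma volume_arc (a b : ℝ) :
    volume ((fun x : ℝ => (x : UnitAddCircle)) '' Icc a b)
      = ENNReal.ofReal (min 1 (b - a)) := by
  haveI : Fact ((0:ℝ) < 1) := ⟨zero_lt_one⟩
  rw [image_Icc_eq_closedBall, AddCircle.volume_closedBall]
  congr 1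
  congr 1
  ring

theorem parallel_bohr_sets {G : Type*} [AddCommGroup G] [TopologicalSpace G]
    [IsTopologicalAddGroup G] [CompactSpace G]
    [MeasurableSpace G] [BorelSpace G]
    (μ : Measure G) [μ.IsAddHaarMeasure] [IsProbabilityMeasure μ]
    (φ : G →+ UnitAddCircle) (hφc : Continuous φ) (hφs : Function.Surjective φ)
    (I J : Set UnitAddCircle)
    (hI : ∃ a b : ℝ, a < b ∧ I = (fun x : ℝ => (x : UnitAddCircle)) '' Set.Icc a b)
    (hJ : ∃ a b : ℝ, a < b ∧ J = (fun x : ℝ => (x : UnitAddCircle)) '' Set.Icc a b) :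
    φ ⁻¹' I + φ ⁻¹' J = φ ⁻¹' (I + J) ∧
    μ (φ ⁻¹' I) = volume I ∧
    μ (φ ⁻¹' J) = volume J ∧
    μ (φ ⁻¹' I + φ ⁻¹' J) = volume (I + J) ∧
    ((volume I).toReal + (volume J).toReal ≤ 1 →
      (μ (φ ⁻¹' I + φ ⁻¹' J)).toReal = (μ (φ ⁻¹' I)).toReal + (μ (φ ⁻¹' J)).toReal) := by
  haveI : Fact ((0:ℝ) < 1) := ⟨zero_lt_one⟩
  obtain ⟨a, b, hab, hIeq⟩ := hI
  obtain ⟨c, d, hcd, hJeq⟩ := hJ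
  -- the pushforward of μ under φ is the Haar probability measure on the circle
  have hmap : Measure.map φ μ = volume := by
    haveI : (Measure.map φ μ).IsAddHaarMeasure :=
      Measure.isAddHaarMeasure_map_of_isFiniteMeasure μ φ hφc hφs
    haveI : IsProbabilityMeasure (Measure.map φ μ) :=
      Measure.isProbabilityMeasure_map hφc.measurable.aemeasurable
    haveI : IsProbabilityMeasure (volume : Measure UnitAddCircle) :=
      ⟨UnitAddCircle.measure_univ⟩
    exact Measure.isAddHaarMeasure_eq_of_isProbabilityMeasure _ _
  have hpre : ∀ S : Set UnitAddCircle, MeasurableSet S → μ (φ ⁻¹' S) = volume S := by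
    intro S hS
    rw [← hmap, Measure.map_apply hφc.measurable hS]
  -- I + J is again an arc
  have hIJ : I + J = (fun x : ℝ => (x : UnitAddCircle)) '' Icc (a + c) (b + d) := by
    rw [hIeq, hJeq, ← icc_add_icc_real hab.le hcd.le]
    exact (Set.image_add (QuotientAddGroup.mk' (AddSubgroup.zmultiples (1:ℝ)))).symm
  -- arcs are measurable (compact images of compact intervals)
  have hmeas : ∀ u v : ℝ, MeasurableSet ((fun x : ℝ => (x : UnitAddCircle)) '' Icc u v) :=
    fun u v => (isCompact_Icc.image (AddCircle.continuous_mk' 1)).measurableSet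
  have hImeas : MeasurableSet I := hIeq ▸ hmeas a b
  have hJmeas : MeasurableSet J := hJeq ▸ hmeas c d
  have hIJmeas : MeasurableSet (I + J) := hIJ ▸ hmeas (a + c) (b + d)
  -- the sum of preimages is the preimage of the sum
  have hsum : φ ⁻¹' I + φ ⁻¹' J = φ ⁻¹' (I + J) := by
    apply Subset.antisymm
    · rintro x ⟨y, hy, z, hz, rfl⟩
      exact ⟨φ y, hy, φ z, hz, (map_add φ y z).symm⟩
    · rintro x ⟨i, hi, j, hj, hij⟩
      obtain ⟨g, rfl⟩ := hφs i
      refine ⟨g, hi, x - g, ?_, add_sub_cancel g x⟩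
      have : φ (x - g) = j := by rw [map_sub, ← hij, add_sub_cancel_left]
      simpa [mem_preimage, this] using hj
  have vI : volume I = ENNReal.ofReal (min 1 (b - a)) := by rw [hIeq, volume_arc]
  have vJ : volume J = ENNReal.ofReal (min 1 (d - c)) := by rw [hJeq, volume_arc]
  have vIJ : volume (I + J) = ENNReal.ofReal (min 1 (b + d - (a + c))) := by
    rw [hIJ, volume_arc]
  refine ⟨hsum, hpre I hImeas, hpre J hJmeas, by rw [hsum, hpre _ hIJmeas], ?_⟩
  intro h
  rw [hsum, hpre _ hIJmeas, hpre I hImeas, hpre J hJmeas, vI, vJ, vIJ] at *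
  rw [ENNReal.toReal_ofReal (le_min zero_le_one (by linarith) : (0:ℝ) ≤ min 1 (b - a)),
      ENNReal.toReal_ofReal (le_min zero_le_one (by linarith) : (0:ℝ) ≤ min 1 (d - c))] at h ⊢
  rw [ENNReal.toReal_ofReal (le_min zero_le_one (by linarith) : (0:ℝ) ≤ min 1 (b + d - (a + c)))]
  have hIpos : 0 < min 1 (b - a) := lt_min zero_lt_one (by linarith)
  have hJpos : 0 < min 1 (d - c) := lt_min zero_lt_one (by linarith)
  have hb : b - a ≤ 1 := by
    by_contra hba
    rw [min_eq_left (by linarith)] at h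
    linarith
  have hd : d - c ≤ 1 := by
    by_contra hdc
    rw [min_eq_right hb, min_eq_left (by linarith)] at h
    linarith
  rw [min_eq_right hb, min_eq_right hd] at h ⊢
  rw [min_eq_right (by linarith)]
  ring
end
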